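/- arXiv:0905.3460 — 2 statements merged into one kernel-verified Lean document; each statement's English description precedes it below -/
import Mathlib

section
/- Let θ ∈ (0, π/2) and let u be a model eigenfunction of H(θ) with eigenvalue σ. Then ∫_{ℝ²₊} (t cos θ − s sin θ) u(s,t)² ds dt = 0. -/
open Real MeasureTheory Set
open Filter Topology
open scoped ContDiff

noncomputable section

/-- Partial derivative with respect to the first variable. -/
def pd1 (u : ℝ → ℝ → ℝ) : ℝ → ℝ → ℝ := fun s t => deriv (fun x => u x t) s

/-- Partial derivative with respect to the second variable. -/
def pd2 (u : ℝ → ℝ → ℝ) : ℝ → ℝ → ℝ := fun s t => deriv (fun y => u s y) t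

/-- The potential `V_θ(s,t) = t cos θ − s sin θ`. -/
def Vpot (θ : ℝ) : ℝ → ℝ → ℝ := fun s t => t * Real.cos θ - s * Real.sin θ

/-- The operator `H(θ) = −∂_s² − ∂_t² + V_θ²` applied to `u`. -/
def Hop (θ : ℝ) (u : ℝ → ℝ → ℝ) : ℝ → ℝ → ℝ :=
  fun s t => - pd1 (pd1 u) s t - pd2 (pd2 u) s t + (Vpot θ s t)^2 * u s t

/-- Integral over the half-plane `{t > 0}` with respect to `ds dt`. -/
def intHalf (f : ℝ → ℝ → ℝ) : ℝ := ∫ s : ℝ, ∫ t in Set.Ioi (0:ℝ), f s t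

/-- Schwartz-class on the closed half-plane: all iterated partial derivatives decay
faster than any power of `|s| + t`. -/
def SchwartzHalf (u : ℝ → ℝ → ℝ) : Prop :=
  ∀ k l n : ℕ, ∃ C : ℝ, ∀ s t : ℝ, 0 ≤ t →
    |pd1^[k] (pd2^[l] u) s t| ≤ C * (1 + |s| + t) ^ (-(n:ℝ))

/-- A model eigenfunction of `H(θ)` with eigenvalue `σ`: smooth up to the boundary,
Schwartz-class, `L²`-normalized, Neumann boundary condition, and `H(θ)u = σu` on `{t ≥ 0}`. -/
structure IsModelEigen (θ : ℝ) (u : ℝ → ℝ → ℝ) (σ : ℝ) : Prop where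
  smooth : ∀ n : ℕ, ContDiff ℝ n (fun p : ℝ × ℝ => u p.1 p.2)
  schwartz : SchwartzHalf u
  normalized : intHalf (fun s t => (u s t)^2) = 1
  neumann : ∀ s : ℝ, pd2 u s 0 = 0
  eigen : ∀ s t : ℝ, 0 ≤ t → Hop θ u s t = σ * u s t

namespace Aux

/-- Smooth two-variable function (uncurried version smooth). -/
def Sm (f : ℝ → ℝ → ℝ) : Prop := ContDiff ℝ ∞ (fun p : ℝ × ℝ => f p.1 p.2)

variable {f : ℝ → ℝ → ℝ}

lemma Sm.hasDerivAt1 (hf : Sm f) (s t : ℝ) :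
    HasDerivAt (fun x => f x t) (fderiv ℝ (fun p : ℝ × ℝ => f p.1 p.2) (s, t) (1, 0)) s := by
  have h := (hf.differentiable (by simp) (s, t)).hasFDerivAt
  have h2 : HasDerivAt (fun x : ℝ => (x, t)) ((1 : ℝ), (0 : ℝ)) s :=
    (hasDerivAt_id s).prodMk (hasDerivAt_const s t)
  exact (h.comp_hasDerivAt s h2)

lemma Sm.hasDerivAt2 (hf : Sm f) (s t : ℝ) :
    HasDerivAt (fun y => f s y) (fderiv ℝ (fun p : ℝ × ℝ => f p.1 p.2) (s, t) (0, 1)) t := by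
  have h := (hf.differentiable (by simp) (s, t)).hasFDerivAt
  have h2 : HasDerivAt (fun y : ℝ => (s, y)) ((0 : ℝ), (1 : ℝ)) t :=
    (hasDerivAt_const t s).prodMk (hasDerivAt_id t)
  exact (h.comp_hasDerivAt t h2)

lemma Sm.pd1_eq (hf : Sm f) (s t : ℝ) :
    pd1 f s t = fderiv ℝ (fun p : ℝ × ℝ => f p.1 p.2) (s, t) (1, 0) :=
  (hf.hasDerivAt1 s t).deriv

lemma Sm.pd2_eq (hf : Sm f) (s t : ℝ) :
    pd2 f s t = fderiv ℝ (fun p : ℝ × ℝ => f p.1 p.2) (s, t) (0, 1) :=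
  (hf.hasDerivAt2 s t).deriv

lemma Sm.hasDerivAt_pd1 (hf : Sm f) (s t : ℝ) :
    HasDerivAt (fun x => f x t) (pd1 f s t) s := by
  rw [hf.pd1_eq]; exact hf.hasDerivAt1 s t

lemma Sm.hasDerivAt_pd2 (hf : Sm f) (s t : ℝ) :
    HasDerivAt (fun y => f s y) (pd2 f s t) t := by
  rw [hf.pd2_eq]; exact hf.hasDerivAt2 s t

lemma Sm.fderiv_apply_smooth (hf : Sm f) (v : ℝ × ℝ) :
    ContDiff ℝ ∞ (fun p : ℝ × ℝ => fderiv ℝ (fun q : ℝ × ℝ => f q.1 q.2) p v) :=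
  (hf.fderiv_right (by simp)).clm_apply contDiff_const

lemma Sm.pd1' (hf : Sm f) : Sm (pd1 f) := by
  have : (fun p : ℝ × ℝ => pd1 f p.1 p.2)
      = fun p : ℝ × ℝ => fderiv ℝ (fun q : ℝ × ℝ => f q.1 q.2) p (1, 0) := by
    funext p; exact hf.pd1_eq p.1 p.2
  rw [Sm, this]; exact hf.fderiv_apply_smooth (1, 0)

lemma Sm.pd2' (hf : Sm f) : Sm (pd2 f) := by
  have : (fun p : ℝ × ℝ => pd2 f p.1 p.2)
      = fun p : ℝ × ℝ => fderiv ℝ (fun q : ℝ × ℝ => f q.1 q.2) p (0, 1) := by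
    funext p; exact hf.pd2_eq p.1 p.2
  rw [Sm, this]; exact hf.fderiv_apply_smooth (0, 1)

/-- Clairaut. -/
lemma Sm.clairaut (hf : Sm f) (s t : ℝ) : pd1 (pd2 f) s t = pd2 (pd1 f) s t := by
  set F := fun p : ℝ × ℝ => f p.1 p.2 with hF
  have hdiff : ∀ y : ℝ × ℝ, HasFDerivAt F (fderiv ℝ F y) y := fun y =>
    (hf.differentiable (by simp) y).hasFDerivAt
  have hF' : ContDiff ℝ ∞ (fderiv ℝ F) := hf.fderiv_right (by simp)
  have hsnd : HasFDerivAt (fderiv ℝ F) (fderiv ℝ (fderiv ℝ F) (s, t)) (s, t) :=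
    (hF'.differentiable (by simp) (s, t)).hasFDerivAt
  have hsymm := second_derivative_symmetric hdiff hsnd (1, 0) (0, 1)
  -- pd1 (pd2 f) s t = fderiv of (fun p => fderiv F p (0,1)) at (s,t) applied to (1,0)
  have e1 : pd1 (pd2 f) s t
      = fderiv ℝ (fun p : ℝ × ℝ => fderiv ℝ F p (0, 1)) (s, t) (1, 0) := by
    have h := (hf.pd2').pd1_eq s t
    rw [h]
    congr 1
    have : (fun p : ℝ × ℝ => pd2 f p.1 p.2) = fun p : ℝ × ℝ => fderiv ℝ F p (0, 1) := by
      funext p; exact hf.pd2_eq p.1 p.2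
    rw [this]
  have e2 : pd2 (pd1 f) s t
      = fderiv ℝ (fun p : ℝ × ℝ => fderiv ℝ F p (1, 0)) (s, t) (0, 1) := by
    have h := (hf.pd1').pd2_eq s t
    rw [h]
    congr 1
    have : (fun p : ℝ × ℝ => pd1 f p.1 p.2) = fun p : ℝ × ℝ => fderiv ℝ F p (1, 0) := by
      funext p; exact hf.pd1_eq p.1 p.2
    rw [this]
  have key : ∀ v w : ℝ × ℝ, fderiv ℝ (fun p : ℝ × ℝ => fderiv ℝ F p v) (s, t) w
      = fderiv ℝ (fderiv ℝ F) (s, t) w v := by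
    intro v w
    have happ : HasFDerivAt (fun p : ℝ × ℝ => fderiv ℝ F p v)
        ((ContinuousLinearMap.apply ℝ ℝ v).comp (fderiv ℝ (fderiv ℝ F) (s, t))) (s, t) :=
      (ContinuousLinearMap.apply ℝ ℝ v).hasFDerivAt.comp (s, t) hsnd
    rw [happ.fderiv]; rfl
  rw [e1, e2, key, key, hsymm]

end Aux

section Helpers

lemma int_inv_sq (m : ℝ) (hm : 0 < m) :
    IntegrableOn (fun t : ℝ => ((m + t) ^ 2)⁻¹) (Ioi (0:ℝ)) := by
  have hderiv : ∀ x ∈ Ioi (0:ℝ), HasDerivAt (fun t : ℝ => -(m + t)⁻¹) (((m + x) ^ 2)⁻¹) x := by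
    intro x hx
    have hx0 : (0:ℝ) < x := hx
    have h1 : HasDerivAt (fun t : ℝ => m + t) 1 x := (hasDerivAt_id x).const_add m
    have h2 := (h1.inv (by nlinarith)).neg
    refine h2.congr_deriv ?_
    ring
  have hcont : ContinuousWithinAt (fun t : ℝ => -(m + t)⁻¹) (Ici 0) 0 := by
    apply ContinuousAt.continuousWithinAt
    have : ContinuousAt (fun t : ℝ => m + t) 0 := by fun_prop
    exact (this.inv₀ (by simpa using hm.ne')).neg
  have htend : Tendsto (fun t : ℝ => -(m + t)⁻¹) atTop (𝓝 0) := by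
    rw [← neg_zero]
    apply Tendsto.neg
    exact tendsto_inv_atTop_zero.comp (tendsto_atTop_add_const_left atTop m tendsto_id)
  exact integrableOn_Ioi_deriv_of_nonneg hcont hderiv (fun x _ => by positivity) htend

lemma integrableOn_of_bound {f : ℝ → ℝ} (hf : Continuous f) {m C : ℝ} (hm : 0 < m)
    (h : ∀ t, 0 ≤ t → |f t| ≤ C * ((m + t) ^ 2)⁻¹) : IntegrableOn f (Ioi (0:ℝ)) := by
  refine Integrable.mono' ((int_inv_sq m hm).const_mul C) hf.aestronglyMeasurable ?_
  filter_upwards [ae_restrict_mem measurableSet_Ioi] with t ht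
  simpa [Real.norm_eq_abs] using h t (le_of_lt ht)

lemma tendsto_bound_atTop {f : ℝ → ℝ} {C m : ℝ}
    (h : ∀ t, 0 ≤ t → |f t| ≤ C * (m + t)⁻¹) : Tendsto f atTop (𝓝 0) := by
  apply squeeze_zero_norm' (a := fun t => C * (m + t)⁻¹)
  · filter_upwards [eventually_ge_atTop (0:ℝ)] with t ht
    simpa [Real.norm_eq_abs] using h t ht
  · have h1 : Tendsto (fun t : ℝ => (m + t)⁻¹) atTop (𝓝 0) :=
      tendsto_inv_atTop_zero.comp (tendsto_atTop_add_const_left atTop m tendsto_id)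
    simpa using h1.const_mul C

lemma tendsto_bound_line_atTop {f : ℝ → ℝ} {C : ℝ}
    (h : ∀ s, |f s| ≤ C * (1 + |s|)⁻¹) : Tendsto f atTop (𝓝 0) := by
  apply squeeze_zero_norm (a := fun s => C * (1 + |s|)⁻¹)
  · intro s; simpa [Real.norm_eq_abs] using h s
  · have h1 : Tendsto (fun s : ℝ => (1 + |s|)⁻¹) atTop (𝓝 0) :=
      tendsto_inv_atTop_zero.comp
        (tendsto_atTop_add_const_left atTop 1 tendsto_abs_atTop_atTop)
    simpa using h1.const_mul C

lemma tendsto_bound_line_atBot {f : ℝ → ℝ} {C : ℝ}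
    (h : ∀ s, |f s| ≤ C * (1 + |s|)⁻¹) : Tendsto f atBot (𝓝 0) := by
  apply squeeze_zero_norm (a := fun s => C * (1 + |s|)⁻¹)
  · intro s; simpa [Real.norm_eq_abs] using h s
  · have h1 : Tendsto (fun s : ℝ => (1 + |s|)⁻¹) atBot (𝓝 0) :=
      tendsto_inv_atTop_zero.comp
        (tendsto_atTop_add_const_left atBot 1 tendsto_abs_atBot_atTop)
    simpa using h1.const_mul C

lemma integrable_of_bound_line {f : ℝ → ℝ} (hf : Continuous f) {C : ℝ}
    (h : ∀ s, |f s| ≤ C * (1 + s ^ 2)⁻¹) : Integrable f := by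
  refine Integrable.mono' (integrable_inv_one_add_sq.const_mul C) hf.aestronglyMeasurable ?_
  exact Eventually.of_forall fun s => by simpa [Real.norm_eq_abs] using h s

lemma abs4 (a b c d : ℝ) : |a - b - c + d| ≤ |a| + |b| + |c| + |d| := by
  have h1 : |a - b - c + d| ≤ |a - b - c| + |d| := abs_add_le _ _
  have h2 : |a - b - c| ≤ |a - b| + |c| := abs_sub _ _
  have h3 : |a - b| ≤ |a| + |b| := abs_sub _ _
  linarith

lemma term_bound {b C D x y p : ℝ} {N j : ℕ} (hb : 1 ≤ b) (hC : 0 ≤ C) (hD : 0 ≤ D)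
    (hx : |x| ≤ C * (b ^ (N + 2))⁻¹) (hy : |y| ≤ C * (b ^ (N + 2))⁻¹)
    (hp : |p| ≤ D * b ^ j) (hj : j ≤ N + 4) :
    |p * (x * y)| ≤ D * C ^ 2 * (b ^ N)⁻¹ := by
  have hb0 : (0:ℝ) < b := lt_of_lt_of_le one_pos hb
  have key : b ^ j * ((b ^ (N + 2))⁻¹ * (b ^ (N + 2))⁻¹) ≤ (b ^ N)⁻¹ := by
    have e : (b ^ (N + 2))⁻¹ * (b ^ (N + 2))⁻¹ = (b ^ (2 * N + 4))⁻¹ := by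
      rw [← mul_inv, ← pow_add]; ring_nf
    rw [e]
    have h1 : b ^ (j + N) ≤ b ^ (2 * N + 4) := pow_le_pow_right₀ hb (by omega)
    calc b ^ j * (b ^ (2 * N + 4))⁻¹ ≤ b ^ j * (b ^ (j + N))⁻¹ := by gcongr
      _ = (b ^ N)⁻¹ := by
          rw [pow_add, mul_inv, ← mul_assoc, mul_inv_cancel₀ (by positivity), one_mul]
  calc |p * (x * y)| = |p| * (|x| * |y|) := by rw [abs_mul, abs_mul]
    _ ≤ (D * b ^ j) * ((C * (b ^ (N + 2))⁻¹) * (C * (b ^ (N + 2))⁻¹)) := by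
        apply mul_le_mul hp _ (by positivity) (by positivity)
        exact mul_le_mul hx hy (abs_nonneg _) (by positivity)
    _ = D * C ^ 2 * (b ^ j * ((b ^ (N + 2))⁻¹ * (b ^ (N + 2))⁻¹)) := by ring
    _ ≤ D * C ^ 2 * (b ^ N)⁻¹ := by
        apply mul_le_mul_of_nonneg_left key (by positivity)

end Helpers

section Main

variable {θ σ : ℝ} {u : ℝ → ℝ → ℝ}

/-- The flux functions. -/
def PP (θ σ : ℝ) (u : ℝ → ℝ → ℝ) (s t : ℝ) : ℝ :=
  (pd1 u s t * pd1 u s t - pd2 u s t * pd2 u s t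
    - (Vpot θ s t * Vpot θ s t - σ) * (u s t * u s t)) / 2

def PPs (θ σ : ℝ) (u : ℝ → ℝ → ℝ) (s t : ℝ) : ℝ :=
  pd1 u s t * pd1 (pd1 u) s t - pd2 u s t * pd1 (pd2 u) s t
    - (Vpot θ s t * Vpot θ s t - σ) * (u s t * pd1 u s t)
    + Real.sin θ * (Vpot θ s t * (u s t * u s t))

def QQ (u : ℝ → ℝ → ℝ) (s t : ℝ) : ℝ := pd1 u s t * pd2 u s t

def QQt (u : ℝ → ℝ → ℝ) (s t : ℝ) : ℝ :=
  pd1 (pd2 u) s t * pd2 u s t + pd1 u s t * pd2 (pd2 u) s t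

lemma hasDerivAt_V (θ : ℝ) (s t : ℝ) :
    HasDerivAt (fun x => Vpot θ x t) (-Real.sin θ) s := by
  unfold Vpot
  simpa using ((hasDerivAt_id s).mul_const (Real.sin θ)).const_sub (t * Real.cos θ)

lemma hasDerivAt_PP (hsm : Aux.Sm u) (s t : ℝ) :
    HasDerivAt (fun x => PP θ σ u x t) (PPs θ σ u s t) s := by
  have h0 := hsm.hasDerivAt_pd1 s t
  have h1 := hsm.pd1'.hasDerivAt_pd1 s t
  have h2 := hsm.pd2'.hasDerivAt_pd1 s t
  have hV := hasDerivAt_V θ s t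
  have H := ((((h1.mul h1).sub (h2.mul h2)).sub
    (((hV.mul hV).sub_const σ).mul (h0.mul h0))).div_const 2)
  refine H.congr_deriv ?_
  unfold PPs
  simp only [Pi.mul_apply]
  ring

lemma hasDerivAt_QQ (hsm : Aux.Sm u) (s t : ℝ) :
    HasDerivAt (fun y => QQ u s y) (QQt u s t) t := by
  have h1 : HasDerivAt (fun y => pd1 u s y) (pd1 (pd2 u) s t) t := by
    have := hsm.pd1'.hasDerivAt_pd2 s t
    rwa [← hsm.clairaut s t] at this
  have h2 := hsm.pd2'.hasDerivAt_pd2 s t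
  exact h1.mul h2

lemma pointwise_id (hu : IsModelEigen θ u σ) (s t : ℝ) (ht : 0 ≤ t) :
    PPs θ σ u s t + QQt u s t = Real.sin θ * (Vpot θ s t * (u s t * u s t)) := by
  have hE := hu.eigen s t ht
  unfold Hop at hE
  unfold PPs QQt
  linear_combination (-(pd1 u s t)) * hE

/-- Conversion of the Schwartz bound. -/
lemma sb (hu : IsModelEigen θ u σ) (k l n : ℕ) :
    ∃ C : ℝ, 0 ≤ C ∧ ∀ s t : ℝ, 0 ≤ t →
      |pd1^[k] (pd2^[l] u) s t| ≤ C * ((1 + |s| + t) ^ n)⁻¹ := by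
  obtain ⟨C, hC⟩ := hu.schwartz k l n
  refine ⟨max C 0, le_max_right _ _, fun s t ht => ?_⟩
  have habs : (0:ℝ) ≤ |s| := abs_nonneg s
  have hb0 : (0:ℝ) < 1 + |s| + t := by linarith
  have he : (1 + |s| + t) ^ (-(n:ℝ)) = ((1 + |s| + t) ^ n)⁻¹ := by
    rw [Real.rpow_neg hb0.le, Real.rpow_natCast]
  have := hC s t ht
  rw [he] at this
  exact this.trans (mul_le_mul_of_nonneg_right (le_max_left _ _) (by positivity))

/-- Master bound: all six relevant derivatives bounded by a common constant. -/
lemma master (hu : IsModelEigen θ u σ) (n : ℕ) :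
    ∃ C : ℝ, 0 ≤ C ∧ ∀ s t : ℝ, 0 ≤ t →
      |u s t| ≤ C * ((1 + |s| + t) ^ n)⁻¹ ∧
      |pd1 u s t| ≤ C * ((1 + |s| + t) ^ n)⁻¹ ∧
      |pd2 u s t| ≤ C * ((1 + |s| + t) ^ n)⁻¹ ∧
      |pd1 (pd1 u) s t| ≤ C * ((1 + |s| + t) ^ n)⁻¹ ∧
      |pd1 (pd2 u) s t| ≤ C * ((1 + |s| + t) ^ n)⁻¹ ∧
      |pd2 (pd2 u) s t| ≤ C * ((1 + |s| + t) ^ n)⁻¹ := by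
  obtain ⟨C0, hC0, h0⟩ := sb hu 0 0 n
  obtain ⟨C1, hC1, h1⟩ := sb hu 1 0 n
  obtain ⟨C2, hC2, h2⟩ := sb hu 0 1 n
  obtain ⟨C3, hC3, h3⟩ := sb hu 2 0 n
  obtain ⟨C4, hC4, h4⟩ := sb hu 1 1 n
  obtain ⟨C5, hC5, h5⟩ := sb hu 0 2 n
  simp only [Function.iterate_succ_apply', Function.iterate_zero_apply] at h0 h1 h2 h3 h4 h5
  refine ⟨C0 + C1 + C2 + C3 + C4 + C5, by linarith, fun s t ht => ?_⟩
  have hA : (0:ℝ) ≤ ((1 + |s| + t) ^ n)⁻¹ := by positivity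
  refine ⟨(h0 s t ht).trans ?_, (h1 s t ht).trans ?_, (h2 s t ht).trans ?_,
    (h3 s t ht).trans ?_, (h4 s t ht).trans ?_, (h5 s t ht).trans ?_⟩ <;>
    apply mul_le_mul_of_nonneg_right (by linarith) hA

lemma abs_V_le {s t : ℝ} (ht : 0 ≤ t) : |Vpot θ s t| ≤ 1 + |s| + t := by
  unfold Vpot
  have h1 : |t * Real.cos θ - s * Real.sin θ| ≤ |t * Real.cos θ| + |s * Real.sin θ| :=
    abs_sub _ _
  have h2 : |t * Real.cos θ| ≤ t := by
    rw [abs_mul, abs_of_nonneg ht]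
    calc t * |Real.cos θ| ≤ t * 1 := by
          apply mul_le_mul_of_nonneg_left (abs_cos_le_one θ) ht
      _ = t := mul_one t
  have h3 : |s * Real.sin θ| ≤ |s| := by
    rw [abs_mul]
    calc |s| * |Real.sin θ| ≤ |s| * 1 := by
          apply mul_le_mul_of_nonneg_left (abs_sin_le_one θ) (abs_nonneg s)
      _ = |s| := mul_one _
  linarith



lemma bound_PPs (hu : IsModelEigen θ u σ) (N : ℕ) :
    ∃ C : ℝ, 0 ≤ C ∧ ∀ s t : ℝ, 0 ≤ t →
      |PPs θ σ u s t| ≤ C * ((1 + |s| + t) ^ N)⁻¹ := by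
  obtain ⟨C, hC, h⟩ := master hu (N + 2)
  refine ⟨(3 + (1 + |σ|)) * C ^ 2, by positivity, fun s t ht => ?_⟩
  have habs : (0:ℝ) ≤ |s| := abs_nonneg s
  have hb : (1:ℝ) ≤ 1 + |s| + t := by linarith
  obtain ⟨B0, B1, B2, B3, B4, B5⟩ := h s t ht
  have hV : |Vpot θ s t| ≤ 1 + |s| + t := abs_V_le ht
  have hone : |(1:ℝ)| ≤ (1:ℝ) * (1 + |s| + t) ^ 0 := by norm_num
  have hsinV : |Real.sin θ * Vpot θ s t| ≤ 1 * (1 + |s| + t) ^ 1 := by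
    rw [abs_mul, pow_one]
    exact mul_le_mul (abs_sin_le_one θ) hV (abs_nonneg _) one_pos.le
  have hVV : |Vpot θ s t * Vpot θ s t - σ| ≤ (1 + |σ|) * (1 + |s| + t) ^ 2 := by
    have h1 : |Vpot θ s t * Vpot θ s t - σ| ≤ |Vpot θ s t| * |Vpot θ s t| + |σ| := by
      calc |Vpot θ s t * Vpot θ s t - σ| ≤ |Vpot θ s t * Vpot θ s t| + |σ| := abs_sub _ _
        _ = |Vpot θ s t| * |Vpot θ s t| + |σ| := by rw [abs_mul]
    have h2 : (1:ℝ) ≤ (1 + |s| + t) ^ 2 := one_le_pow₀ hb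
    nlinarith [abs_nonneg σ, abs_nonneg (Vpot θ s t)]
  have T1 := term_bound hb hC one_pos.le B1 B3 hone (by omega)
  have T2 := term_bound hb hC one_pos.le B2 B4 hone (by omega)
  have T3 := term_bound hb hC (by positivity : (0:ℝ) ≤ 1 + |σ|) B0 B1 hVV (by omega)
  have T4 := term_bound hb hC one_pos.le B0 B0 hsinV (by omega)
  have habs4 : |PPs θ σ u s t| ≤
      |(1:ℝ) * (pd1 u s t * pd1 (pd1 u) s t)| + |(1:ℝ) * (pd2 u s t * pd1 (pd2 u) s t)|
      + |(Vpot θ s t * Vpot θ s t - σ) * (u s t * pd1 u s t)|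
      + |(Real.sin θ * Vpot θ s t) * (u s t * u s t)| := by
    have e : PPs θ σ u s t = (1:ℝ) * (pd1 u s t * pd1 (pd1 u) s t)
        - (1:ℝ) * (pd2 u s t * pd1 (pd2 u) s t)
        - (Vpot θ s t * Vpot θ s t - σ) * (u s t * pd1 u s t)
        + (Real.sin θ * Vpot θ s t) * (u s t * u s t) := by unfold PPs; ring
    rw [e]; exact abs4 _ _ _ _
  have hfin : (0:ℝ) ≤ ((1 + |s| + t) ^ N)⁻¹ := by positivity
  calc |PPs θ σ u s t| ≤ _ := habs4
    _ ≤ 1 * C ^ 2 * ((1 + |s| + t) ^ N)⁻¹ + 1 * C ^ 2 * ((1 + |s| + t) ^ N)⁻¹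
        + (1 + |σ|) * C ^ 2 * ((1 + |s| + t) ^ N)⁻¹ + 1 * C ^ 2 * ((1 + |s| + t) ^ N)⁻¹ := by
        linarith
    _ = (3 + (1 + |σ|)) * C ^ 2 * ((1 + |s| + t) ^ N)⁻¹ := by ring

lemma bound_QQt (hu : IsModelEigen θ u σ) (N : ℕ) :
    ∃ C : ℝ, 0 ≤ C ∧ ∀ s t : ℝ, 0 ≤ t →
      |QQt u s t| ≤ C * ((1 + |s| + t) ^ N)⁻¹ := by
  obtain ⟨C, hC, h⟩ := master hu (N + 2)
  refine ⟨2 * C ^ 2, by positivity, fun s t ht => ?_⟩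
  have habs : (0:ℝ) ≤ |s| := abs_nonneg s
  have hb : (1:ℝ) ≤ 1 + |s| + t := by linarith
  obtain ⟨B0, B1, B2, B3, B4, B5⟩ := h s t ht
  have hone : |(1:ℝ)| ≤ (1:ℝ) * (1 + |s| + t) ^ 0 := by norm_num
  have T1 := term_bound hb hC one_pos.le B4 B2 hone (by omega)
  have T2 := term_bound hb hC one_pos.le B1 B5 hone (by omega)
  have e : QQt u s t = (1:ℝ) * (pd1 (pd2 u) s t * pd2 u s t)
      + (1:ℝ) * (pd1 u s t * pd2 (pd2 u) s t) := by unfold QQt; ring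
  calc |QQt u s t| ≤ |(1:ℝ) * (pd1 (pd2 u) s t * pd2 u s t)|
        + |(1:ℝ) * (pd1 u s t * pd2 (pd2 u) s t)| := by rw [e]; exact abs_add_le _ _
    _ ≤ 1 * C ^ 2 * ((1 + |s| + t) ^ N)⁻¹ + 1 * C ^ 2 * ((1 + |s| + t) ^ N)⁻¹ := by linarith
    _ = 2 * C ^ 2 * ((1 + |s| + t) ^ N)⁻¹ := by ring

lemma bound_QQ (hu : IsModelEigen θ u σ) (N : ℕ) :
    ∃ C : ℝ, 0 ≤ C ∧ ∀ s t : ℝ, 0 ≤ t →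
      |QQ u s t| ≤ C * ((1 + |s| + t) ^ N)⁻¹ := by
  obtain ⟨C, hC, h⟩ := master hu (N + 2)
  refine ⟨1 * C ^ 2, by positivity, fun s t ht => ?_⟩
  have habs : (0:ℝ) ≤ |s| := abs_nonneg s
  have hb : (1:ℝ) ≤ 1 + |s| + t := by linarith
  obtain ⟨B0, B1, B2, B3, B4, B5⟩ := h s t ht
  have hone : |(1:ℝ)| ≤ (1:ℝ) * (1 + |s| + t) ^ 0 := by norm_num
  have T1 := term_bound hb hC one_pos.le B1 B2 hone (by omega)
  have e : |QQ u s t| = |(1:ℝ) * (pd1 u s t * pd2 u s t)| := by unfold QQ; rw [one_mul]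
  rw [e]; exact T1

lemma bound_PP (hu : IsModelEigen θ u σ) (N : ℕ) :
    ∃ C : ℝ, 0 ≤ C ∧ ∀ s t : ℝ, 0 ≤ t →
      |PP θ σ u s t| ≤ C * ((1 + |s| + t) ^ N)⁻¹ := by
  obtain ⟨C, hC, h⟩ := master hu (N + 2)
  refine ⟨(2 + (1 + |σ|)) * C ^ 2, by positivity, fun s t ht => ?_⟩
  have habs : (0:ℝ) ≤ |s| := abs_nonneg s
  have hb : (1:ℝ) ≤ 1 + |s| + t := by linarith
  obtain ⟨B0, B1, B2, B3, B4, B5⟩ := h s t ht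
  have hV : |Vpot θ s t| ≤ 1 + |s| + t := abs_V_le ht
  have hone : |(1:ℝ)| ≤ (1:ℝ) * (1 + |s| + t) ^ 0 := by norm_num
  have hVV : |Vpot θ s t * Vpot θ s t - σ| ≤ (1 + |σ|) * (1 + |s| + t) ^ 2 := by
    have h1 : |Vpot θ s t * Vpot θ s t - σ| ≤ |Vpot θ s t| * |Vpot θ s t| + |σ| := by
      calc |Vpot θ s t * Vpot θ s t - σ| ≤ |Vpot θ s t * Vpot θ s t| + |σ| := abs_sub _ _
        _ = |Vpot θ s t| * |Vpot θ s t| + |σ| := by rw [abs_mul]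
    have h2 : (1:ℝ) ≤ (1 + |s| + t) ^ 2 := one_le_pow₀ hb
    nlinarith [abs_nonneg σ, abs_nonneg (Vpot θ s t)]
  have T1 := term_bound hb hC one_pos.le B1 B1 hone (by omega)
  have T2 := term_bound hb hC one_pos.le B2 B2 hone (by omega)
  have T3 := term_bound hb hC (by positivity : (0:ℝ) ≤ 1 + |σ|) B0 B0 hVV (by omega)
  have e : PP θ σ u s t = ((1:ℝ) * (pd1 u s t * pd1 u s t)
      - (1:ℝ) * (pd2 u s t * pd2 u s t)
      - (Vpot θ s t * Vpot θ s t - σ) * (u s t * u s t) + 0) / 2 := by unfold PP; ring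
  have habs3 : |PP θ σ u s t| ≤ (|(1:ℝ) * (pd1 u s t * pd1 u s t)|
      + |(1:ℝ) * (pd2 u s t * pd2 u s t)|
      + |(Vpot θ s t * Vpot θ s t - σ) * (u s t * u s t)| + |(0:ℝ)|) / 2 := by
    rw [e, abs_div]
    have := abs4 ((1:ℝ) * (pd1 u s t * pd1 u s t)) ((1:ℝ) * (pd2 u s t * pd2 u s t))
      ((Vpot θ s t * Vpot θ s t - σ) * (u s t * u s t)) 0
    rw [abs_two]
    gcongr
  have hfin : (0:ℝ) ≤ ((1 + |s| + t) ^ N)⁻¹ := by positivity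
  have habs0 : |(0:ℝ)| = 0 := abs_zero
  calc |PP θ σ u s t| ≤ _ := habs3
    _ ≤ (2 + (1 + |σ|)) * C ^ 2 * ((1 + |s| + t) ^ N)⁻¹ := by
        rw [habs0] at habs3 ⊢
        linarith [T1, T2, T3, abs_nonneg ((1:ℝ) * (pd1 u s t * pd1 u s t)),
          abs_nonneg ((1:ℝ) * (pd2 u s t * pd2 u s t)),
          abs_nonneg ((Vpot θ s t * Vpot θ s t - σ) * (u s t * u s t))]



lemma contJ_PPs (hsm : Aux.Sm u) : Continuous fun p : ℝ × ℝ => PPs θ σ u p.1 p.2 := by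
  have c0 : Continuous fun p : ℝ × ℝ => u p.1 p.2 := hsm.continuous
  have c1 : Continuous fun p : ℝ × ℝ => pd1 u p.1 p.2 := hsm.pd1'.continuous
  have c2 : Continuous fun p : ℝ × ℝ => pd2 u p.1 p.2 := hsm.pd2'.continuous
  have c3 : Continuous fun p : ℝ × ℝ => pd1 (pd1 u) p.1 p.2 := hsm.pd1'.pd1'.continuous
  have c4 : Continuous fun p : ℝ × ℝ => pd1 (pd2 u) p.1 p.2 := hsm.pd2'.pd1'.continuous
  have cV : Continuous fun p : ℝ × ℝ => Vpot θ p.1 p.2 := by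
    unfold Vpot
    exact (continuous_snd.mul continuous_const).sub (continuous_fst.mul continuous_const)
  unfold PPs
  exact (((c1.mul c3).sub (c2.mul c4)).sub
    (((cV.mul cV).sub continuous_const).mul (c0.mul c1))).add
    (continuous_const.mul (cV.mul (c0.mul c0)))

lemma contJ_QQ (hsm : Aux.Sm u) : Continuous fun p : ℝ × ℝ => QQ u p.1 p.2 := by
  have c1 : Continuous fun p : ℝ × ℝ => pd1 u p.1 p.2 := hsm.pd1'.continuous
  have c2 : Continuous fun p : ℝ × ℝ => pd2 u p.1 p.2 := hsm.pd2'.continuous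
  unfold QQ
  exact c1.mul c2

lemma contJ_QQt (hsm : Aux.Sm u) : Continuous fun p : ℝ × ℝ => QQt u p.1 p.2 := by
  have c1 : Continuous fun p : ℝ × ℝ => pd1 u p.1 p.2 := hsm.pd1'.continuous
  have c2 : Continuous fun p : ℝ × ℝ => pd2 u p.1 p.2 := hsm.pd2'.continuous
  have c4 : Continuous fun p : ℝ × ℝ => pd1 (pd2 u) p.1 p.2 := hsm.pd2'.pd1'.continuous
  have c5 : Continuous fun p : ℝ × ℝ => pd2 (pd2 u) p.1 p.2 := hsm.pd2'.pd2'.continuous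
  unfold QQt
  exact (c4.mul c2).add (c1.mul c5)

lemma intPPs_t (hu : IsModelEigen θ u σ) (hsm : Aux.Sm u) (s : ℝ) :
    IntegrableOn (fun t => PPs θ σ u s t) (Ioi (0:ℝ)) := by
  obtain ⟨C, hC, hB⟩ := bound_PPs hu 2
  have hcont : Continuous fun t => PPs θ σ u s t :=
    (contJ_PPs hsm).comp (Continuous.prodMk_right s)
  have hm : (0:ℝ) < 1 + |s| := by positivity
  exact integrableOn_of_bound hcont hm (fun t ht => hB s t ht)

lemma intQQt_t (hu : IsModelEigen θ u σ) (hsm : Aux.Sm u) (s : ℝ) :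
    IntegrableOn (fun t => QQt u s t) (Ioi (0:ℝ)) := by
  obtain ⟨C, hC, hB⟩ := bound_QQt hu 2
  have hcont : Continuous fun t => QQt u s t :=
    (contJ_QQt hsm).comp (Continuous.prodMk_right s)
  have hm : (0:ℝ) < 1 + |s| := by positivity
  exact integrableOn_of_bound hcont hm (fun t ht => hB s t ht)

lemma innerT (hu : IsModelEigen θ u σ) (hsm : Aux.Sm u) (s : ℝ) :
    ∫ t in Ioi (0:ℝ), QQt u s t = 0 := by
  have h0 : QQ u s 0 = 0 := by unfold QQ; rw [hu.neumann s, mul_zero]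
  have hcont : ContinuousWithinAt (fun t => QQ u s t) (Ici 0) 0 :=
    (((contJ_QQ hsm).comp (Continuous.prodMk_right s))).continuousWithinAt
  have hderiv : ∀ x ∈ Ioi (0:ℝ), HasDerivAt (fun t => QQ u s t) (QQt u s x) x :=
    fun x _ => hasDerivAt_QQ hsm s x
  have htend : Tendsto (fun t => QQ u s t) atTop (𝓝 0) := by
    obtain ⟨C, hC, hB⟩ := bound_QQ hu 1
    exact tendsto_bound_atTop (C := C) (m := 1 + |s|)
      (fun t ht => by simpa [pow_one] using hB s t ht)
  have := integral_Ioi_of_hasDerivAt_of_tendsto hcont hderiv (intQQt_t hu hsm s) htend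
  rw [this, h0, sub_zero]

lemma innerS (hu : IsModelEigen θ u σ) (hsm : Aux.Sm u) (t : ℝ) (ht : 0 ≤ t) :
    ∫ s : ℝ, PPs θ σ u s t = 0 := by
  obtain ⟨C1, hC1, hB1⟩ := bound_PP hu 1
  obtain ⟨C2, hC2, hB2⟩ := bound_PPs hu 2
  have hbnd1 : ∀ s, |PP θ σ u s t| ≤ C1 * (1 + |s|)⁻¹ := by
    intro s
    have h := hB1 s t ht
    rw [pow_one] at h
    refine h.trans (mul_le_mul_of_nonneg_left ?_ hC1)
    apply inv_anti₀ (by positivity)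
    linarith
  have hint : Integrable (fun s => PPs θ σ u s t) := by
    apply integrable_of_bound_line ((contJ_PPs hsm).comp (continuous_id.prodMk continuous_const))
    intro s
    have h := hB2 s t ht
    refine h.trans (mul_le_mul_of_nonneg_left ?_ hC2)
    apply inv_anti₀ (by positivity)
    nlinarith [abs_nonneg s, sq_abs s]
  have := integral_of_hasDerivAt_of_tendsto
    (fun s => hasDerivAt_PP hsm s t) hint
    (tendsto_bound_line_atBot hbnd1) (tendsto_bound_line_atTop hbnd1)
  simpa using this

lemma uncPPs (hu : IsModelEigen θ u σ) (hsm : Aux.Sm u) :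
    Integrable (Function.uncurry fun s t => PPs θ σ u s t)
      ((volume : Measure ℝ).prod ((volume : Measure ℝ).restrict (Ioi (0:ℝ)))) := by
  obtain ⟨C, hC, hB⟩ := bound_PPs hu 4
  have hg : Integrable (fun p : ℝ × ℝ => C * ((1 + p.1 ^ 2)⁻¹ * ((1 + p.2) ^ 2)⁻¹))
      ((volume : Measure ℝ).prod ((volume : Measure ℝ).restrict (Ioi (0:ℝ)))) :=
    (integrable_inv_one_add_sq.mul_prod (int_inv_sq 1 one_pos)).const_mul C
  have hae : ∀ᵐ p ∂((volume : Measure ℝ).prod ((volume : Measure ℝ).restrict (Ioi (0:ℝ)))),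
      (0:ℝ) < p.2 := by
    rw [ae_iff]
    have hset : {p : ℝ × ℝ | ¬ (0:ℝ) < p.2} = (Set.univ : Set ℝ) ×ˢ {t : ℝ | ¬ (0:ℝ) < t} := by
      ext p; simp
    rw [hset, Measure.prod_prod]
    have h0 : ((volume : Measure ℝ).restrict (Ioi (0:ℝ))) {t : ℝ | ¬ (0:ℝ) < t} = 0 := by
      rw [Measure.restrict_apply' measurableSet_Ioi]
      have : {t : ℝ | ¬ (0:ℝ) < t} ∩ Ioi (0:ℝ) = ∅ := by
        ext x; simp only [Set.mem_inter_iff, Set.mem_setOf_eq, Set.mem_Ioi, Set.mem_empty_iff_false,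
          iff_false, not_and, not_lt]
        intro h; exact h
      rw [this, measure_empty]
    rw [h0, mul_zero]
  refine hg.mono' ((contJ_PPs hsm).aestronglyMeasurable) ?_
  filter_upwards [hae] with p hp
  have h4 := hB p.1 p.2 hp.le
  have key : ((1 + |p.1| + p.2) ^ 4)⁻¹ ≤ (1 + p.1 ^ 2)⁻¹ * ((1 + p.2) ^ 2)⁻¹ := by
    have s1 : (1 + p.1 ^ 2) ≤ (1 + |p.1|) ^ 2 := by nlinarith [abs_nonneg p.1, sq_abs p.1]
    have s2 : (1 + |p.1|) * (1 + p.2) ≤ (1 + |p.1| + p.2) ^ 2 := by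
      nlinarith [abs_nonneg p.1, hp.le]
    have s5 : ((1 + |p.1|) * (1 + p.2)) ^ 2 ≤ ((1 + |p.1| + p.2) ^ 2) ^ 2 :=
      pow_le_pow_left₀ (by positivity) s2 2
    have s6 : (1 + p.1 ^ 2) * ((1 + p.2) ^ 2) ≤ (1 + |p.1| + p.2) ^ 4 := by
      have s3 : (1 + p.1 ^ 2) * ((1 + p.2) ^ 2) ≤ ((1 + |p.1|) ^ 2) * ((1 + p.2) ^ 2) :=
        mul_le_mul_of_nonneg_right s1 (by positivity)
      calc (1 + p.1 ^ 2) * ((1 + p.2) ^ 2) ≤ ((1 + |p.1|) ^ 2) * ((1 + p.2) ^ 2) := s3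
        _ = ((1 + |p.1|) * (1 + p.2)) ^ 2 := by ring
        _ ≤ ((1 + |p.1| + p.2) ^ 2) ^ 2 := s5
        _ = (1 + |p.1| + p.2) ^ 4 := by ring
    rw [← mul_inv]
    exact inv_anti₀ (by positivity) s6
  calc ‖Function.uncurry (fun s t => PPs θ σ u s t) p‖
      = |PPs θ σ u p.1 p.2| := by rw [Function.uncurry, Real.norm_eq_abs]
    _ ≤ C * ((1 + |p.1| + p.2) ^ 4)⁻¹ := h4
    _ ≤ C * ((1 + p.1 ^ 2)⁻¹ * ((1 + p.2) ^ 2)⁻¹) := mul_le_mul_of_nonneg_left key hC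

end Main


/-- Lemma 2.4 (momentum formula): `∫ V_θ u² = 0`. -/
theorem momentum_formula (θ : ℝ) (hθ : θ ∈ Set.Ioo 0 (π/2))
    (u : ℝ → ℝ → ℝ) (σ : ℝ) (hu : IsModelEigen θ u σ) :
    intHalf (fun s t => Vpot θ s t * (u s t)^2) = 0 := by
  have hsm : Aux.Sm u := by
    rw [Aux.Sm, contDiff_infty]
    exact hu.smooth
  have hsin : 0 < Real.sin θ :=
    Real.sin_pos_of_pos_of_lt_pi hθ.1 (hθ.2.trans (half_lt_self Real.pi_pos))
  have key : ∀ s : ℝ, ∫ t in Ioi (0:ℝ), Real.sin θ * (Vpot θ s t * (u s t)^2)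
      = ∫ t in Ioi (0:ℝ), PPs θ σ u s t := by
    intro s
    have e1 : ∫ t in Ioi (0:ℝ), Real.sin θ * (Vpot θ s t * (u s t)^2)
        = ∫ t in Ioi (0:ℝ), (PPs θ σ u s t + QQt u s t) := by
      apply setIntegral_congr_fun measurableSet_Ioi
      intro t ht
      have hpt := pointwise_id hu s t (le_of_lt ht)
      show Real.sin θ * (Vpot θ s t * (u s t)^2) = PPs θ σ u s t + QQt u s t
      rw [pow_two]
      exact hpt.symm
    rw [e1, integral_add (intPPs_t hu hsm s) (intQQt_t hu hsm s), innerT hu hsm s, add_zero]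
  have lhs_eq : Real.sin θ * intHalf (fun s t => Vpot θ s t * (u s t)^2)
      = ∫ s : ℝ, ∫ t in Ioi (0:ℝ), PPs θ σ u s t := by
    unfold intHalf
    rw [← integral_const_mul]
    congr 1
    funext s
    calc Real.sin θ * ∫ t in Ioi (0:ℝ), Vpot θ s t * (u s t)^2
        = ∫ t in Ioi (0:ℝ), Real.sin θ * (Vpot θ s t * (u s t)^2) :=
          (integral_const_mul _ _).symm
      _ = ∫ t in Ioi (0:ℝ), PPs θ σ u s t := key s
  have swap : ∫ s : ℝ, ∫ t in Ioi (0:ℝ), PPs θ σ u s t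
      = ∫ t in Ioi (0:ℝ), ∫ s : ℝ, PPs θ σ u s t :=
    integral_integral_swap (uncPPs hu hsm)
  have zero2 : ∫ t in Ioi (0:ℝ), ∫ s : ℝ, PPs θ σ u s t = 0 := by
    have h : ∀ t ∈ Ioi (0:ℝ), (∫ s : ℝ, PPs θ σ u s t) = (0:ℝ) := fun t ht =>
      innerS hu hsm t (le_of_lt ht)
    rw [setIntegral_congr_fun measurableSet_Ioi h]
    simp
  have final : Real.sin θ * intHalf (fun s t => Vpot θ s t * (u s t)^2) = 0 := by
    rw [lhs_eq, swap, zero2]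
  exact (mul_eq_zero.mp final).resolve_left (ne_of_gt hsin)
end
end

section
/- Let θ ∈ (0, π/2) and let u be a model eigenfunction of H(θ) with eigenvalue σ. Then the Virial identities hold: ∫_{ℝ²₊} (|∂_s u|² + |∂_t u|²) ds dt = ∫_{ℝ²₊} V_θ² u² ds dt = σ/2. -/
open Real MeasureTheory Set

noncomputable section

-- ===================== Infrastructure =====================

open Filter

def Sm (u : ℝ → ℝ → ℝ) : Prop := ∀ n : ℕ, ContDiff ℝ n (fun p : ℝ × ℝ => u p.1 p.2)

namespace Sm
variable {u f g : ℝ → ℝ → ℝ}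

theorem diffU (hu : Sm u) : Differentiable ℝ (fun p : ℝ × ℝ => u p.1 p.2) :=
  (hu 1).differentiable (by norm_num)

theorem hasDerivAt1 (hu : Sm u) (s t : ℝ) :
    HasDerivAt (fun x => u x t) (fderiv ℝ (fun p : ℝ × ℝ => u p.1 p.2) (s, t) (1, 0)) s :=
  by have := ((hu.diffU (s, t)).hasFDerivAt).comp_hasDerivAt s
      ((hasDerivAt_id' s).prodMk (hasDerivAt_const s t)); exact this

theorem hasDerivAt2 (hu : Sm u) (s t : ℝ) :
    HasDerivAt (fun y => u s y) (fderiv ℝ (fun p : ℝ × ℝ => u p.1 p.2) (s, t) (0, 1)) t :=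
  ((hu.diffU (s, t)).hasFDerivAt).comp_hasDerivAt t
    ((hasDerivAt_const t s).prodMk (hasDerivAt_id t))

theorem pd1_eq (hu : Sm u) (s t : ℝ) :
    pd1 u s t = fderiv ℝ (fun p : ℝ × ℝ => u p.1 p.2) (s, t) (1, 0) :=
  (hu.hasDerivAt1 s t).deriv

theorem pd2_eq (hu : Sm u) (s t : ℝ) :
    pd2 u s t = fderiv ℝ (fun p : ℝ × ℝ => u p.1 p.2) (s, t) (0, 1) :=
  (hu.hasDerivAt2 s t).deriv

theorem hasDerivAt_pd1 (hu : Sm u) (s t : ℝ) :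
    HasDerivAt (fun x => u x t) (pd1 u s t) s := by
  rw [hu.pd1_eq]; exact hu.hasDerivAt1 s t

theorem hasDerivAt_pd2 (hu : Sm u) (s t : ℝ) :
    HasDerivAt (fun y => u s y) (pd2 u s t) t := by
  rw [hu.pd2_eq]; exact hu.hasDerivAt2 s t

theorem pd1' (hu : Sm u) : Sm (pd1 u) := by
  intro n
  have h : (fun p : ℝ × ℝ => pd1 u p.1 p.2)
      = fun p : ℝ × ℝ => fderiv ℝ (fun p : ℝ × ℝ => u p.1 p.2) p (1, 0) :=
    funext fun p => hu.pd1_eq p.1 p.2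
  rw [h]
  exact ((hu (n+1)).fderiv_right (by exact_mod_cast le_refl ((n:ℕ∞)+1))).clm_apply contDiff_const

theorem pd2' (hu : Sm u) : Sm (pd2 u) := by
  intro n
  have h : (fun p : ℝ × ℝ => pd2 u p.1 p.2)
      = fun p : ℝ × ℝ => fderiv ℝ (fun p : ℝ × ℝ => u p.1 p.2) p (0, 1) :=
    funext fun p => hu.pd2_eq p.1 p.2
  rw [h]
  exact ((hu (n+1)).fderiv_right (by exact_mod_cast le_refl ((n:ℕ∞)+1))).clm_apply contDiff_const

theorem contU (hu : Sm u) : Continuous (fun p : ℝ × ℝ => u p.1 p.2) :=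
  (hu 0).continuous

theorem cont1 (hu : Sm u) (t : ℝ) : Continuous (fun x => u x t) :=
  hu.contU.comp (continuous_id.prodMk continuous_const)

theorem cont2 (hu : Sm u) (s : ℝ) : Continuous (fun y => u s y) :=
  hu.contU.comp (continuous_const.prodMk continuous_id)

theorem symm (hu : Sm u) : ∀ s t : ℝ, pd1 (pd2 u) s t = pd2 (pd1 u) s t := by
  intro s t
  set U := fun p : ℝ × ℝ => u p.1 p.2 with hU
  have hdf : ContDiff ℝ 1 (fderiv ℝ U) :=
    (hu 2).fderiv_right (by norm_num)
  have hdfd : DifferentiableAt ℝ (fderiv ℝ U) (s, t) := hdf.differentiable one_ne_zero _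
  have hf'' : HasFDerivAt (fderiv ℝ U) (fderiv ℝ (fderiv ℝ U) (s, t)) (s, t) :=
    hdfd.hasFDerivAt
  have hsymm := second_derivative_symmetric (f := U) (fun y => (hu.diffU y).hasFDerivAt) hf''
  have e1 : pd1 (pd2 u) s t = fderiv ℝ (fderiv ℝ U) (s, t) (1, 0) (0, 1) := by
    rw [hu.pd2'.pd1_eq s t]
    have h2 : (fun p : ℝ × ℝ => pd2 u p.1 p.2) = fun p : ℝ × ℝ => fderiv ℝ U p (0, 1) :=
      funext fun p => hu.pd2_eq p.1 p.2
    rw [h2, fderiv_clm_apply hdfd (differentiableAt_const _)]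
    simp
  have e2 : pd2 (pd1 u) s t = fderiv ℝ (fderiv ℝ U) (s, t) (0, 1) (1, 0) := by
    rw [hu.pd1'.pd2_eq s t]
    have h2 : (fun p : ℝ × ℝ => pd1 u p.1 p.2) = fun p : ℝ × ℝ => fderiv ℝ U p (1, 0) :=
      funext fun p => hu.pd1_eq p.1 p.2
    rw [h2, fderiv_clm_apply hdfd (differentiableAt_const _)]
    simp
  rw [e1, e2, hsymm]

theorem add (hf : Sm f) (hg : Sm g) : Sm (fun s t => f s t + g s t) :=
  fun n => (hf n).add (hg n)

theorem mul (hf : Sm f) (hg : Sm g) : Sm (fun s t => f s t * g s t) :=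
  fun n => (hf n).mul (hg n)

theorem sub (hf : Sm f) (hg : Sm g) : Sm (fun s t => f s t - g s t) :=
  fun n => (hf n).sub (hg n)

theorem const_mul (hf : Sm f) (c : ℝ) : Sm (fun s t => c * f s t) :=
  fun n => contDiff_const.mul (hf n)

theorem pow2 (hf : Sm f) : Sm (fun s t => f s t ^ 2) :=
  fun n => (hf n).pow 2

theorem coordS (hf : Sm f) : Sm (fun s t => s * f s t) :=
  fun n => contDiff_fst.mul (hf n)

theorem coordT (hf : Sm f) : Sm (fun s t => t * f s t) :=
  fun n => contDiff_snd.mul (hf n)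

end Sm

theorem smV (θ : ℝ) : Sm (Vpot θ) :=
  fun _ => (contDiff_snd.mul contDiff_const).sub (contDiff_fst.mul contDiff_const)

-- ===================== Decay class =====================

def Dec (f : ℝ → ℝ → ℝ) : Prop :=
  ∀ n : ℕ, ∃ C : ℝ, 0 ≤ C ∧ ∀ s t : ℝ, 0 ≤ t → |f s t| ≤ C / (1 + |s| + t) ^ n

namespace Dec
variable {f g : ℝ → ℝ → ℝ}

theorem base_pos {s t : ℝ} (ht : 0 ≤ t) : (0:ℝ) < 1 + |s| + t := by
  have := abs_nonneg s; linarith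

theorem base_one_le {s t : ℝ} (ht : 0 ≤ t) : (1:ℝ) ≤ 1 + |s| + t := by
  have := abs_nonneg s; linarith

theorem congr (h : ∀ s t : ℝ, 0 ≤ t → f s t = g s t) (hg : Dec g) : Dec f := by
  intro n
  obtain ⟨C, hC, hb⟩ := hg n
  exact ⟨C, hC, fun s t ht => by rw [h s t ht]; exact hb s t ht⟩

theorem add (hf : Dec f) (hg : Dec g) : Dec (fun s t => f s t + g s t) := by
  intro n
  obtain ⟨C1, hC1, h1⟩ := hf n
  obtain ⟨C2, hC2, h2⟩ := hg n
  refine ⟨C1 + C2, by linarith, fun s t ht => ?_⟩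
  calc |f s t + g s t| ≤ |f s t| + |g s t| := abs_add_le _ _
    _ ≤ C1 / (1 + |s| + t) ^ n + C2 / (1 + |s| + t) ^ n := by
        exact _root_.add_le_add (h1 s t ht) (h2 s t ht)
    _ = (C1 + C2) / (1 + |s| + t) ^ n := by ring

theorem const_mul (hf : Dec f) (c : ℝ) : Dec (fun s t => c * f s t) := by
  intro n
  obtain ⟨C, hC, h⟩ := hf n
  refine ⟨|c| * C, by positivity, fun s t ht => ?_⟩
  rw [abs_mul, mul_div_assoc]
  exact mul_le_mul_of_nonneg_left (h s t ht) (abs_nonneg c)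

theorem sub (hf : Dec f) (hg : Dec g) : Dec (fun s t => f s t - g s t) :=
  Dec.congr (fun s t _ => by ring) (hf.add (hg.const_mul (-1)))

/-- multiply by a function bounded by `A * (1+|s|+t)` -/
theorem mul_poly (hf : Dec f) {A : ℝ}
    (hg : ∀ s t : ℝ, 0 ≤ t → |g s t| ≤ A * (1 + |s| + t)) :
    Dec (fun s t => g s t * f s t) := by
  intro n
  obtain ⟨C, hC, h⟩ := hf (n + 1)
  have hA : 0 ≤ A := by
    have := (abs_nonneg (g 0 0)).trans (hg 0 0 le_rfl)
    nlinarith [base_pos (s := (0:ℝ)) (t := (0:ℝ)) le_rfl]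
  refine ⟨A * C, by positivity, fun s t ht => ?_⟩
  have hb := base_pos (s := s) ht
  rw [abs_mul]
  calc |g s t| * |f s t| ≤ (A * (1 + |s| + t)) * (C / (1 + |s| + t) ^ (n+1)) :=
        mul_le_mul (hg s t ht) (h s t ht) (abs_nonneg _) (by positivity)
    _ = A * C / (1 + |s| + t) ^ n := by
        field_simp
        ring

theorem mul (hf : Dec f) (hg : Dec g) : Dec (fun s t => g s t * f s t) := by
  obtain ⟨C, hC, h⟩ := hg 0
  exact hf.mul_poly (A := C) (fun s t ht => by
    have h2 := h s t ht
    simp only [pow_zero, div_one] at h2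
    nlinarith [base_one_le (s := s) ht, abs_nonneg (g s t)])

theorem mulS (hf : Dec f) : Dec (fun s t => s * f s t) :=
  hf.mul_poly (A := 1) (fun s t ht => by
    rw [one_mul]
    have := abs_nonneg s; linarith [abs_nonneg s, ht])

theorem mulT (hf : Dec f) : Dec (fun s t => t * f s t) :=
  hf.mul_poly (A := 1) (fun s t ht => by
    rw [one_mul, abs_of_nonneg ht]
    have := abs_nonneg s; linarith)

end Dec

theorem vpot_bound (θ : ℝ) : ∀ s t : ℝ, 0 ≤ t → |Vpot θ s t| ≤ 1 * (1 + |s| + t) := by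
  intro s t ht
  rw [one_mul]
  have h1 : |Vpot θ s t| ≤ |t * Real.cos θ| + |s * Real.sin θ| := abs_sub _ _
  rw [abs_mul, abs_mul] at h1
  have h2 : |t| * |Real.cos θ| ≤ t * 1 := by
    rw [abs_of_nonneg ht]
    exact mul_le_mul_of_nonneg_left (abs_cos_le_one θ) ht
  have h3 : |s| * |Real.sin θ| ≤ |s| * 1 :=
    mul_le_mul_of_nonneg_left (abs_sin_le_one θ) (abs_nonneg s)
  nlinarith [abs_nonneg s]

theorem dec_of_schwartz {u : ℝ → ℝ → ℝ} (h : SchwartzHalf u) (k l : ℕ) :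
    Dec (pd1^[k] (pd2^[l] u)) := by
  intro n
  obtain ⟨C, hC⟩ := h k l n
  refine ⟨max C 0, le_max_right _ _, fun s t ht => ?_⟩
  have hb := Dec.base_pos (s := s) ht
  have h1 := hC s t ht
  have heq : (1 + |s| + t) ^ (-(n:ℝ)) = ((1 + |s| + t) ^ n)⁻¹ := by
    rw [Real.rpow_neg (le_of_lt hb), Real.rpow_natCast]
  rw [heq] at h1
  calc |pd1^[k] (pd2^[l] u) s t| ≤ C * ((1 + |s| + t) ^ n)⁻¹ := h1
    _ ≤ max C 0 * ((1 + |s| + t) ^ n)⁻¹ := by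
        exact mul_le_mul_of_nonneg_right (le_max_left _ _) (by positivity)
    _ = max C 0 / (1 + |s| + t) ^ n := (div_eq_mul_inv _ _).symm

-- ===================== Integration machinery =====================

theorem Dec.slice_bound {f : ℝ → ℝ → ℝ} (hf : Dec f) :
    ∃ C : ℝ, 0 ≤ C ∧ ∀ s t : ℝ, 0 ≤ t → |f s t| ≤ C * (1 + t^2)⁻¹ := by
  obtain ⟨C, hC, h⟩ := hf 2
  refine ⟨C, hC, fun s t ht => ?_⟩
  have hb := Dec.base_pos (s := s) ht
  have h2 : (1 + t^2) ≤ (1 + |s| + t)^2 := by nlinarith [abs_nonneg s]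
  calc |f s t| ≤ C / (1 + |s| + t) ^ 2 := h s t ht
    _ ≤ C / (1 + t^2) := by
        apply div_le_div_of_nonneg_left hC (by positivity) h2
    _ = C * (1 + t^2)⁻¹ := by rw [div_eq_mul_inv]

theorem integrable_inv_one_add_sq_Ioi :
    IntegrableOn (fun t : ℝ => (1 + t^2)⁻¹) (Ioi 0) := integrable_inv_one_add_sq.integrableOn

theorem Dec.integral_bound {f : ℝ → ℝ → ℝ} (hf : Dec f) (n : ℕ) :
    ∃ C : ℝ, 0 ≤ C ∧ ∀ s t : ℝ, 0 ≤ t →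
      |f s t| ≤ (C / (1 + |s|) ^ n) * (1 + t^2)⁻¹ := by
  obtain ⟨C, hC, h⟩ := hf (n + 2)
  refine ⟨C, hC, fun s t ht => ?_⟩
  have hb := Dec.base_pos (s := s) ht
  have hs1 : (0:ℝ) < 1 + |s| := by have := abs_nonneg s; linarith
  have key : (1 + |s|) ^ n * (1 + t^2) ≤ (1 + |s| + t) ^ (n + 2) := by
    have h1 : (1 + |s|) ^ n ≤ (1 + |s| + t) ^ n :=
      pow_le_pow_left₀ (by positivity) (by linarith) n
    have h2 : (1 + t^2) ≤ (1 + |s| + t) ^ 2 := by nlinarith [abs_nonneg s]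
    calc (1 + |s|) ^ n * (1 + t^2) ≤ (1 + |s| + t) ^ n * (1 + |s| + t)^2 :=
          mul_le_mul h1 h2 (by positivity) (by positivity)
      _ = (1 + |s| + t) ^ (n + 2) := by rw [← pow_add]
  calc |f s t| ≤ C / (1 + |s| + t) ^ (n+2) := h s t ht
    _ ≤ C / ((1 + |s|) ^ n * (1 + t^2)) := by
        apply div_le_div_of_nonneg_left hC (by positivity) key
    _ = (C / (1 + |s|) ^ n) * (1 + t^2)⁻¹ := by
        rw [div_mul_eq_div_div, div_eq_mul_inv]

theorem sliceInt {f : ℝ → ℝ → ℝ} (hs : Sm f) (hd : Dec f) (s : ℝ) :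
    IntegrableOn (fun t => f s t) (Ioi 0) := by
  obtain ⟨C, hC, h⟩ := hd.slice_bound
  refine Integrable.mono' (integrable_inv_one_add_sq_Ioi.const_mul C)
    ((hs.cont2 s).aestronglyMeasurable) ?_
  refine (ae_restrict_iff' measurableSet_Ioi).2 (Eventually.of_forall fun t ht => ?_)
  rw [Real.norm_eq_abs]
  exact h s t (le_of_lt ht)

theorem integral_decay {f : ℝ → ℝ → ℝ} (hd : Dec f) (n : ℕ) :
    ∃ C : ℝ, 0 ≤ C ∧ ∀ s : ℝ, |∫ t in Ioi (0:ℝ), f s t| ≤ C / (1 + |s|) ^ n := by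
  obtain ⟨C, hC, h⟩ := hd.integral_bound n
  set I := ∫ t in Ioi (0:ℝ), (1 + t^2)⁻¹ with hIdef
  have hI : 0 ≤ I := integral_nonneg (fun t => by positivity)
  refine ⟨C * I, by positivity, fun s => ?_⟩
  have hb : ‖∫ t in Ioi (0:ℝ), f s t‖ ≤ ∫ t in Ioi (0:ℝ), (C / (1 + |s|) ^ n) * (1 + t^2)⁻¹ := by
    refine norm_integral_le_of_norm_le (integrable_inv_one_add_sq_Ioi.const_mul _) ?_
    refine (ae_restrict_iff' measurableSet_Ioi).2 (Eventually.of_forall fun t ht => ?_)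
    rw [Real.norm_eq_abs]
    exact h s t (le_of_lt ht)
  rw [integral_const_mul] at hb
  rw [Real.norm_eq_abs] at hb
  calc |∫ t in Ioi (0:ℝ), f s t| ≤ (C / (1 + |s|) ^ n) * I := hb
    _ = C * I / (1 + |s|) ^ n := by ring

theorem outer_cont {f : ℝ → ℝ → ℝ} (hs : Sm f) (hd : Dec f) :
    Continuous (fun s => ∫ t in Ioi (0:ℝ), f s t) := by
  obtain ⟨C, hC, h⟩ := hd.slice_bound
  refine continuous_of_dominated (fun x => (hs.cont2 x).aestronglyMeasurable)
    (fun x => (ae_restrict_iff' measurableSet_Ioi).2 (Eventually.of_forall fun t ht => ?_))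
    (integrable_inv_one_add_sq_Ioi.const_mul C)
    (Eventually.of_forall fun t => hs.cont1 t)
  rw [Real.norm_eq_abs]
  exact h x t (le_of_lt ht)

theorem outerInt {f : ℝ → ℝ → ℝ} (hs : Sm f) (hd : Dec f) :
    Integrable (fun s => ∫ t in Ioi (0:ℝ), f s t) := by
  obtain ⟨C, hC, h⟩ := integral_decay hd 2
  refine Integrable.mono' (integrable_inv_one_add_sq.const_mul C)
    (outer_cont hs hd).aestronglyMeasurable (Eventually.of_forall fun s => ?_)
  rw [Real.norm_eq_abs]
  refine (h s).trans ?_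
  have h2 : (1 + s^2) ≤ (1 + |s|)^2 := by nlinarith [abs_nonneg s, sq_abs s]
  calc C / (1 + |s|)^2 ≤ C / (1 + s^2) :=
        div_le_div_of_nonneg_left hC (by positivity) h2
    _ = C * (1 + s^2)⁻¹ := div_eq_mul_inv _ _

theorem outer_tendsto_zero {f : ℝ → ℝ → ℝ} (hd : Dec f) :
    Tendsto (fun s => ∫ t in Ioi (0:ℝ), f s t) atTop (nhds 0) ∧
    Tendsto (fun s => ∫ t in Ioi (0:ℝ), f s t) atBot (nhds 0) := by
  obtain ⟨C, hC, h⟩ := integral_decay hd 1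
  have hbTop : Tendsto (fun s : ℝ => C / (1 + |s|) ^ 1) atTop (nhds 0) :=
    Tendsto.div_atTop tendsto_const_nhds (by
      simpa using tendsto_atTop_add_const_left atTop 1 tendsto_abs_atTop_atTop)
  have hbBot : Tendsto (fun s : ℝ => C / (1 + |s|) ^ 1) atBot (nhds 0) :=
    Tendsto.div_atTop tendsto_const_nhds (by
      simpa using tendsto_atTop_add_const_left atBot 1 tendsto_abs_atBot_atTop)
  exact ⟨squeeze_zero_norm (fun s => by rw [Real.norm_eq_abs]; exact h s) hbTop,
    squeeze_zero_norm (fun s => by rw [Real.norm_eq_abs]; exact h s) hbBot⟩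

theorem inner_pd2_zero {G : ℝ → ℝ → ℝ} (hGs : Sm G) (hGd : Dec G) (hG2 : Dec (pd2 G))
    (hG0 : ∀ s, G s 0 = 0) (s : ℝ) : ∫ t in Ioi (0:ℝ), pd2 G s t = 0 := by
  obtain ⟨C, hC, h⟩ := hGd.slice_bound
  have htend : Tendsto (fun t => G s t) atTop (nhds 0) := by
    refine squeeze_zero_norm' (a := fun t => C * (1 + t^2)⁻¹) ?_ ?_
    · filter_upwards [eventually_ge_atTop (0:ℝ)] with t ht
      rw [Real.norm_eq_abs]; exact h s t ht
    · have h1 : Tendsto (fun t : ℝ => 1 + t^2) atTop atTop :=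
        tendsto_atTop_add_const_left atTop 1 (tendsto_pow_atTop two_ne_zero)
      simpa using h1.inv_tendsto_atTop.const_mul C
  have h0 := integral_Ioi_of_hasDerivAt_of_tendsto
    (f := fun t => G s t) (f' := fun t => pd2 G s t) (a := 0) (m := 0)
    (hGs.cont2 s).continuousWithinAt
    (fun t _ => hGs.hasDerivAt_pd2 s t)
    (sliceInt hGs.pd2' hG2 s) htend
  rw [h0, hG0 s, sub_zero]

theorem key_hasDerivAt {F : ℝ → ℝ → ℝ} (hFs : Sm F) (hFd : Dec F) (hF1 : Dec (pd1 F)) (s₀ : ℝ) :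
    HasDerivAt (fun s => ∫ t in Ioi (0:ℝ), F s t) (∫ t in Ioi (0:ℝ), pd1 F s₀ t) s₀ := by
  obtain ⟨C, hC, h⟩ := hF1.slice_bound
  exact (hasDerivAt_integral_of_dominated_loc_of_deriv_le
    (F := fun s t => F s t) (F' := fun s t => pd1 F s t)
    (bound := fun t => C * (1 + t^2)⁻¹) (s := Metric.ball s₀ 1) (Metric.ball_mem_nhds s₀ one_pos)
    (Eventually.of_forall fun x => (hFs.cont2 x).aestronglyMeasurable)
    (sliceInt hFs hFd s₀)
    ((hFs.pd1'.cont2 s₀).aestronglyMeasurable)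
    ((ae_restrict_iff' measurableSet_Ioi).2 (Eventually.of_forall fun t ht => fun x _ => by
      rw [Real.norm_eq_abs]; exact h x t (le_of_lt ht)))
    (integrable_inv_one_add_sq_Ioi.const_mul C)
    (Eventually.of_forall fun t => fun x _ => hFs.hasDerivAt_pd1 x t)).2

/-- Master divergence theorem on the half plane. -/
theorem intHalf_div_zero {F G : ℝ → ℝ → ℝ} (hFs : Sm F) (hGs : Sm G)
    (hFd : Dec F) (hGd : Dec G) (hF1 : Dec (pd1 F)) (hG2 : Dec (pd2 G))
    (hG0 : ∀ s, G s 0 = 0) :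
    intHalf (fun s t => pd1 F s t + pd2 G s t) = 0 := by
  have hsplit : ∀ s : ℝ, ∫ t in Ioi (0:ℝ), (pd1 F s t + pd2 G s t)
      = ∫ t in Ioi (0:ℝ), pd1 F s t := by
    intro s
    rw [integral_add (sliceInt hFs.pd1' hF1 s) (sliceInt hGs.pd2' hG2 s),
      inner_pd2_zero hGs hGd hG2 hG0 s, add_zero]
  have h0 : intHalf (fun s t => pd1 F s t + pd2 G s t)
      = ∫ s : ℝ, ∫ t in Ioi (0:ℝ), pd1 F s t := by
    unfold intHalf
    exact integral_congr_ae (Eventually.of_forall hsplit)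
  rw [h0]
  have h1 := integral_of_hasDerivAt_of_tendsto
    (f := fun s => ∫ t in Ioi (0:ℝ), F s t) (f' := fun s => ∫ t in Ioi (0:ℝ), pd1 F s t)
    (key_hasDerivAt hFs hFd hF1)
    (outerInt hFs.pd1' hF1)
    (outer_tendsto_zero hFd).2 (outer_tendsto_zero hFd).1
  rw [h1, sub_zero]

theorem intHalf_add {f g : ℝ → ℝ → ℝ} (hfs : Sm f) (hfd : Dec f) (hgs : Sm g) (hgd : Dec g) :
    intHalf (fun s t => f s t + g s t) = intHalf f + intHalf g := by
  unfold intHalf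
  have h1 : ∀ s : ℝ, ∫ t in Ioi (0:ℝ), (f s t + g s t)
      = (∫ t in Ioi (0:ℝ), f s t) + ∫ t in Ioi (0:ℝ), g s t := fun s =>
    integral_add (sliceInt hfs hfd s) (sliceInt hgs hgd s)
  rw [integral_congr_ae (Eventually.of_forall h1)]
  exact integral_add (outerInt hfs hfd) (outerInt hgs hgd)

theorem intHalf_const_mul (c : ℝ) (f : ℝ → ℝ → ℝ) :
    intHalf (fun s t => c * f s t) = c * intHalf f := by
  unfold intHalf
  simp_rw [integral_const_mul]

theorem intHalf_congr {f g : ℝ → ℝ → ℝ} (h : ∀ s t : ℝ, 0 < t → f s t = g s t) :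
    intHalf f = intHalf g := by
  unfold intHalf
  refine integral_congr_ae (Eventually.of_forall fun s => ?_)
  exact setIntegral_congr_fun measurableSet_Ioi (fun t ht => h s t ht)


theorem virial_identities' (θ : ℝ)
    (u : ℝ → ℝ → ℝ) (σ : ℝ) (hu : IsModelEigen θ u σ) :
    intHalf (fun s t => (pd1 u s t)^2 + (pd2 u s t)^2) = σ / 2 ∧
    intHalf (fun s t => (Vpot θ s t)^2 * (u s t)^2) = σ / 2 := by
  have hSm : Sm u := hu.smooth
  have s1 : Sm (pd1 u) := hSm.pd1'
  have s2 : Sm (pd2 u) := hSm.pd2'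
  have sV : Sm (Vpot θ) := smV θ
  have hVb := vpot_bound θ
  have d0 : Dec u := dec_of_schwartz hu.schwartz 0 0
  have d1 : Dec (pd1 u) := dec_of_schwartz hu.schwartz 1 0
  have d2 : Dec (pd2 u) := dec_of_schwartz hu.schwartz 0 1
  have d11 : Dec (pd1 (pd1 u)) := dec_of_schwartz hu.schwartz 2 0
  have d12 : Dec (pd1 (pd2 u)) := dec_of_schwartz hu.schwartz 1 1
  have d22 : Dec (pd2 (pd2 u)) := dec_of_schwartz hu.schwartz 0 2
  have hsymfun : pd2 (pd1 u) = pd1 (pd2 u) := funext fun s => funext fun t => (hSm.symm s t).symm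
  have d21 : Dec (pd2 (pd1 u)) := hsymfun ▸ d12
  -- ============ Application 1 : energy identity ============
  have e1 : ∀ s t : ℝ, pd1 (fun a b => u a b * pd1 u a b) s t = pd1 u s t * pd1 u s t + u s t * pd1 (pd1 u) s t :=
    fun s t => ((hSm.hasDerivAt_pd1 s t).mul (s1.hasDerivAt_pd1 s t)).deriv
  have e2 : ∀ s t : ℝ, pd2 (fun a b => u a b * pd2 u a b) s t = pd2 u s t * pd2 u s t + u s t * pd2 (pd2 u) s t :=
    fun s t => ((hSm.hasDerivAt_pd2 s t).mul (s2.hasDerivAt_pd2 s t)).deriv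
  have master1 := intHalf_div_zero (F := (fun a b => u a b * pd1 u a b)) (G := (fun a b => u a b * pd2 u a b))
    (hSm.mul s1) (hSm.mul s2) (d1.mul d0) (d2.mul d0)
    (Dec.congr (fun s t _ => e1 s t) ((d1.mul d1).add (d11.mul d0)))
    (Dec.congr (fun s t _ => e2 s t) ((d2.mul d2).add (d22.mul d0)))
    (fun s => by show u s 0 * pd2 u s 0 = 0; rw [hu.neumann s, mul_zero])
  have id1 : ∀ s t : ℝ, 0 < t →
      pd1 (fun a b => u a b * pd1 u a b) s t + pd2 (fun a b => u a b * pd2 u a b) s t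
      = (((pd1 u s t)^2 + (pd2 u s t)^2) + (Vpot θ s t)^2 * (u s t)^2) + (-σ) * (u s t)^2 := by
    intro s t ht
    have heig := hu.eigen s t ht.le
    simp only [Hop] at heig
    rw [e1 s t, e2 s t]
    linear_combination (-(u s t)) * heig
  have step1 : intHalf (fun s t =>
      (((pd1 u s t)^2 + (pd2 u s t)^2) + (Vpot θ s t)^2 * (u s t)^2) + (-σ) * (u s t)^2) = 0 :=
    (intHalf_congr id1).symm.trans master1
  -- split
  have SK : Sm (fun s t => (pd1 u s t)^2 + (pd2 u s t)^2) := s1.pow2.add s2.pow2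
  have DK : Dec (fun s t => (pd1 u s t)^2 + (pd2 u s t)^2) :=
    Dec.congr (fun s t _ => by ring) ((d1.mul d1).add (d2.mul d2))
  have SQ : Sm (fun s t => (Vpot θ s t)^2 * (u s t)^2) := sV.pow2.mul hSm.pow2
  have DQ : Dec (fun s t => (Vpot θ s t)^2 * (u s t)^2) :=
    Dec.congr (fun s t _ => by ring) (((d0.mul d0).mul_poly hVb).mul_poly hVb)
  have SR : Sm (fun s t => (u s t)^2) := hSm.pow2
  have DR : Dec (fun s t => (u s t)^2) := Dec.congr (fun s t _ => by ring) (d0.mul d0)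
  have split1 : intHalf (fun s t =>
        (((pd1 u s t)^2 + (pd2 u s t)^2) + (Vpot θ s t)^2 * (u s t)^2) + (-σ) * (u s t)^2)
      = (intHalf (fun s t => (pd1 u s t)^2 + (pd2 u s t)^2)
          + intHalf (fun s t => (Vpot θ s t)^2 * (u s t)^2)) + (-σ) * 1 := by
    rw [intHalf_add (SK.add SQ) (DK.add DQ) (SR.const_mul (-σ)) (DR.const_mul (-σ)),
      intHalf_add SK DK SQ DQ, intHalf_const_mul, hu.normalized]
  have eq1 : intHalf (fun s t => (pd1 u s t)^2 + (pd2 u s t)^2)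
      + intHalf (fun s t => (Vpot θ s t)^2 * (u s t)^2) - σ = 0 := by
    rw [split1] at step1; linarith
  -- ============ Application 2 : virial identity ============
  have SPf : Sm (fun a b => pd1 u a b * pd1 u a b + pd2 u a b * pd2 u a b + Vpot θ a b * Vpot θ a b * (u a b * u a b) - σ * (u a b * u a b)) :=
    (((s1.mul s1).add (s2.mul s2)).add ((sV.mul sV).mul (hSm.mul hSm))).sub
      ((hSm.mul hSm).const_mul σ)
  have DPf : Dec (fun a b => pd1 u a b * pd1 u a b + pd2 u a b * pd2 u a b + Vpot θ a b * Vpot θ a b * (u a b * u a b) - σ * (u a b * u a b)) :=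
    (((d1.mul d1).add (d2.mul d2)).add
      (Dec.congr (fun s t _ => by ring) (((d0.mul d0).mul_poly hVb).mul_poly hVb))).sub
      ((d0.mul d0).const_mul σ)
  have SW : Sm (fun a b => a * pd1 u a b + b * pd2 u a b) := s1.coordS.add s2.coordT
  have DW : Dec (fun a b => a * pd1 u a b + b * pd2 u a b) := d1.mulS.add d2.mulT
  have SF2 : Sm (fun a b => (1/2) * (a * (pd1 u a b * pd1 u a b + pd2 u a b * pd2 u a b + Vpot θ a b * Vpot θ a b * (u a b * u a b) - σ * (u a b * u a b))) - pd1 u a b * (a * pd1 u a b + b * pd2 u a b)) := (SPf.coordS.const_mul (1/2)).sub (s1.mul SW)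
  have DF2 : Dec (fun a b => (1/2) * (a * (pd1 u a b * pd1 u a b + pd2 u a b * pd2 u a b + Vpot θ a b * Vpot θ a b * (u a b * u a b) - σ * (u a b * u a b))) - pd1 u a b * (a * pd1 u a b + b * pd2 u a b)) := (DPf.mulS.const_mul (1/2)).sub (DW.mul d1)
  have SG2 : Sm (fun a b => (1/2) * (b * (pd1 u a b * pd1 u a b + pd2 u a b * pd2 u a b + Vpot θ a b * Vpot θ a b * (u a b * u a b) - σ * (u a b * u a b))) - pd2 u a b * (a * pd1 u a b + b * pd2 u a b)) := (SPf.coordT.const_mul (1/2)).sub (s2.mul SW)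
  have DG2 : Dec (fun a b => (1/2) * (b * (pd1 u a b * pd1 u a b + pd2 u a b * pd2 u a b + Vpot θ a b * Vpot θ a b * (u a b * u a b) - σ * (u a b * u a b))) - pd2 u a b * (a * pd1 u a b + b * pd2 u a b)) := (DPf.mulT.const_mul (1/2)).sub (DW.mul d2)
  have eF2 : ∀ s t : ℝ, pd1 (fun a b => (1/2) * (a * (pd1 u a b * pd1 u a b + pd2 u a b * pd2 u a b + Vpot θ a b * Vpot θ a b * (u a b * u a b) - σ * (u a b * u a b))) - pd1 u a b * (a * pd1 u a b + b * pd2 u a b)) s t = (1/2) * (1 * (pd1 u s t * pd1 u s t + pd2 u s t * pd2 u s t + Vpot θ s t * Vpot θ s t * (u s t * u s t) - σ * (u s t * u s t)) + s * ((((pd1 (pd1 u) s t * pd1 u s t + pd1 u s t * pd1 (pd1 u) s t) + (pd1 (pd2 u) s t * pd2 u s t + pd2 u s t * pd1 (pd2 u) s t)) + (((0 - 1 * Real.sin θ) * Vpot θ s t + Vpot θ s t * (0 - 1 * Real.sin θ)) * (u s t * u s t) + Vpot θ s t * Vpot θ s t * (pd1 u s t * u s t + u s t * pd1 u s t))) -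 σ * (pd1 u s t * u s t + u s t * pd1 u s t))) - (pd1 (pd1 u) s t * (s * pd1 u s t + t * pd2 u s t) + pd1 u s t * ((1 * pd1 u s t + s * pd1 (pd1 u) s t) + t * pd1 (pd2 u) s t)) := by
    intro s t
    have hv : HasDerivAt (fun x => Vpot θ x t) (0 - 1 * Real.sin θ) s :=
      (hasDerivAt_const s (t * Real.cos θ)).sub ((hasDerivAt_id s).mul_const (Real.sin θ))
    have hP : HasDerivAt (fun x => pd1 u x t * pd1 u x t + pd2 u x t * pd2 u x t + Vpot θ x t * Vpot θ x t * (u x t * u x t) - σ * (u x t * u x t)) ((((pd1 (pd1 u) s t * pd1 u s t + pd1 u s t * pd1 (pd1 u) s t) + (pd1 (pd2 u) s t * pd2 u s t + pd2 u s t * pd1 (pd2 u) s t)) + (((0 - 1 * Real.sin θ) * Vpot θ s t + Vpot θ s t * (0 - 1 * Real.sin θ)) * (u s t * u s t) + Vpot θ s t * Vpot θ s t * (pd1 u s t * u s t + u s t * pd1 u s t))) - σ * (pd1 u s t * u s t + u s t * pd1 u s t)) s :=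
      ((((s1.hasDerivAt_pd1 s t).mul (s1.hasDerivAt_pd1 s t)).add
        ((s2.hasDerivAt_pd1 s t).mul (s2.hasDerivAt_pd1 s t))).add
        ((hv.mul hv).mul ((hSm.hasDerivAt_pd1 s t).mul (hSm.hasDerivAt_pd1 s t)))).sub
        (((hSm.hasDerivAt_pd1 s t).mul (hSm.hasDerivAt_pd1 s t)).const_mul σ)
    have hW : HasDerivAt (fun x => x * pd1 u x t + t * pd2 u x t) ((1 * pd1 u s t + s * pd1 (pd1 u) s t) + t * pd1 (pd2 u) s t) s :=
      ((hasDerivAt_id s).mul (s1.hasDerivAt_pd1 s t)).add ((s2.hasDerivAt_pd1 s t).const_mul t)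
    exact ((((hasDerivAt_id s).mul hP).const_mul (1/2)).sub
      ((s1.hasDerivAt_pd1 s t).mul hW)).deriv
  have eG2 : ∀ s t : ℝ, pd2 (fun a b => (1/2) * (b * (pd1 u a b * pd1 u a b + pd2 u a b * pd2 u a b + Vpot θ a b * Vpot θ a b * (u a b * u a b) - σ * (u a b * u a b))) - pd2 u a b * (a * pd1 u a b + b * pd2 u a b)) s t = (1/2) * (1 * (pd1 u s t * pd1 u s t + pd2 u s t * pd2 u s t + Vpot θ s t * Vpot θ s t * (u s t * u s t) - σ * (u s t * u s t)) + t * ((((pd2 (pd1 u) s t * pd1 u s t + pd1 u s t * pd2 (pd1 u) s t) + (pd2 (pd2 u) s t * pd2 u s t + pd2 u s t * pd2 (pd2 u) s t)) + (((1 * Real.cos θ - 0) * Vpot θ s t + Vpot θ s t * (1 * Real.cos θ - 0)) * (u s t * u s t) + Vpot θ s t * Vpot θ s t * (pd2 u s t * u s t + u s t * pd2 u s t))) - σ * (pd2 u s t * u s t + u s t * pd2 u s t))) - (pd2 (pd2 u) s t * (s * pd1 u s t + t * pd2 u s t) + pd2 u s t * (s * pd2 (pd1 u) s t + (1 * pd2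 u s t + t * pd2 (pd2 u) s t))) := by
    intro s t
    have hv : HasDerivAt (fun y => Vpot θ s y) (1 * Real.cos θ - 0) t :=
      ((hasDerivAt_id t).mul_const (Real.cos θ)).sub (hasDerivAt_const t (s * Real.sin θ))
    have hP : HasDerivAt (fun y => pd1 u s y * pd1 u s y + pd2 u s y * pd2 u s y + Vpot θ s y * Vpot θ s y * (u s y * u s y) - σ * (u s y * u s y)) ((((pd2 (pd1 u) s t * pd1 u s t + pd1 u s t * pd2 (pd1 u) s t) + (pd2 (pd2 u) s t * pd2 u s t + pd2 u s t * pd2 (pd2 u) s t)) + (((1 * Real.cos θ - 0) * Vpot θ s t + Vpot θ s t * (1 * Real.cos θ - 0)) * (u s t * u s t) + Vpot θ s t * Vpot θ s t * (pd2 u s t * u s t + u s t * pd2 u s t))) - σ * (pd2 u s t * u s t + u s t * pd2 u s t)) t :=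
      ((((s1.hasDerivAt_pd2 s t).mul (s1.hasDerivAt_pd2 s t)).add
        ((s2.hasDerivAt_pd2 s t).mul (s2.hasDerivAt_pd2 s t))).add
        ((hv.mul hv).mul ((hSm.hasDerivAt_pd2 s t).mul (hSm.hasDerivAt_pd2 s t)))).sub
        (((hSm.hasDerivAt_pd2 s t).mul (hSm.hasDerivAt_pd2 s t)).const_mul σ)
    have hW : HasDerivAt (fun y => s * pd1 u s y + y * pd2 u s y) (s * pd2 (pd1 u) s t + (1 * pd2 u s t + t * pd2 (pd2 u) s t)) t :=
      ((s1.hasDerivAt_pd2 s t).const_mul s).add ((hasDerivAt_id t).mul (s2.hasDerivAt_pd2 s t))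
    exact ((((hasDerivAt_id t).mul hP).const_mul (1/2)).sub
      ((s2.hasDerivAt_pd2 s t).mul hW)).deriv
  have DpF2 : Dec (pd1 (fun a b => (1/2) * (a * (pd1 u a b * pd1 u a b + pd2 u a b * pd2 u a b + Vpot θ a b * Vpot θ a b * (u a b * u a b) - σ * (u a b * u a b))) - pd1 u a b * (a * pd1 u a b + b * pd2 u a b))) := by
    refine Dec.congr (g := fun s t => (1/2) * (pd1 u s t * pd1 u s t + pd2 u s t * pd2 u s t + Vpot θ s t * Vpot θ s t * (u s t * u s t) - σ * (u s t * u s t)) + s * (pd2 u s t * pd1 (pd2 u) s t) + (- Real.sin θ) * (s * (Vpot θ s t * (u s t * u s t))) + s * (Vpot θ s t * (Vpot θ s t * (u s t * pd1 u s t))) + (- σ) * (s * (u s t * pd1 u s t)) + (-1 : ℝ) * (t * (pd2 u s t * pd1 (pd1 u) s t)) + (-1 : ℝ) * (pd1 u s t * pd1 u s t) + (-1 : ℝ) * (s * (pd1 u s t * pd1 (pd1 u) s t)) + (-1 : ℝ) * (t * (pd1 u s t * pd1 (pd2 u) s t))) (fun s t _ => by rw [eF2 s t]; ring) ?_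
    exact ((((((((DPf.const_mul (1/2)).add ((d12.mul d2).mulS)).add
      ((((d0.mul d0).mul_poly hVb).mulS).const_mul (- Real.sin θ))).add
      ((((d1.mul d0).mul_poly hVb).mul_poly hVb).mulS)).add
      (((d1.mul d0).mulS).const_mul (- σ))).add
      (((d11.mul d2).mulT).const_mul (-1))).add
      ((d1.mul d1).const_mul (-1))).add
      (((d11.mul d1).mulS).const_mul (-1))).add
      (((d12.mul d1).mulT).const_mul (-1))
  have DpG2 : Dec (pd2 (fun a b => (1/2) * (b * (pd1 u a b * pd1 u a b + pd2 u a b * pd2 u a b + Vpot θ a b * Vpot θ a b * (u a b * u a b) - σ * (u a b * u a b))) - pd2 u a b * (a * pd1 u a b + b * pd2 u a b))) := by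
    refine Dec.congr (g := fun s t => (1/2) * (pd1 u s t * pd1 u s t + pd2 u s t * pd2 u s t + Vpot θ s t * Vpot θ s t * (u s t * u s t) - σ * (u s t * u s t)) + t * (pd1 u s t * pd2 (pd1 u) s t) + (Real.cos θ) * (t * (Vpot θ s t * (u s t * u s t))) + t * (Vpot θ s t * (Vpot θ s t * (u s t * pd2 u s t))) + (- σ) * (t * (u s t * pd2 u s t)) + (-1 : ℝ) * (s * (pd1 u s t * pd2 (pd2 u) s t)) + (-1 : ℝ) * (pd2 u s t * pd2 u s t) + (-1 : ℝ) * (t * (pd2 u s t * pd2 (pd2 u) s t)) + (-1 : ℝ) * (s * (pd2 u s t * pd2 (pd1 u) s t))) (fun s t _ => by rw [eG2 s t]; ring) ?_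
    exact ((((((((DPf.const_mul (1/2)).add ((d21.mul d1).mulT)).add
      ((((d0.mul d0).mul_poly hVb).mulT).const_mul (Real.cos θ))).add
      ((((d2.mul d0).mul_poly hVb).mul_poly hVb).mulT)).add
      (((d2.mul d0).mulT).const_mul (- σ))).add
      (((d22.mul d1).mulS).const_mul (-1))).add
      ((d2.mul d2).const_mul (-1))).add
      (((d22.mul d2).mulT).const_mul (-1))).add
      (((d21.mul d2).mulS).const_mul (-1))
  have master2 := intHalf_div_zero (F := (fun a b => (1/2) * (a * (pd1 u a b * pd1 u a b + pd2 u a b * pd2 u a b + Vpot θ a b * Vpot θ a b * (u a b * u a b) - σ * (u a b * u a b))) - pd1 u a b * (a * pd1 u a b + b * pd2 u a b))) (G := (fun a b => (1/2) * (b * (pd1 u a b * pd1 u a b + pd2 u a b * pd2 u a b + Vpot θ a b * Vpot θ a b * (u a b * u a b) - σ * (u a b * u a b))) - pd2 u a b * (a * pd1 u a b + b * pd2 u a b)))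
    SF2 SG2 DF2 DG2 DpF2 DpG2
    (fun s => by
      show (1/2) * ((0:ℝ) * (pd1 u s 0 * pd1 u s 0 + pd2 u s 0 * pd2 u s 0 + Vpot θ s 0 * Vpot θ s 0 * (u s 0 * u s 0) - σ * (u s 0 * u s 0))) - pd2 u s 0 * (s * pd1 u s 0 + 0 * pd2 u s 0) = 0
      rw [hu.neumann s]; ring)
  have id2 : ∀ s t : ℝ, 0 < t →
      pd1 (fun a b => (1/2) * (a * (pd1 u a b * pd1 u a b + pd2 u a b * pd2 u a b + Vpot θ a b * Vpot θ a b * (u a b * u a b) - σ * (u a b * u a b))) - pd1 u a b * (a * pd1 u a b + b * pd2 u a b)) s t + pd2 (fun a b => (1/2) * (b * (pd1 u a b * pd1 u a b + pd2 u a b * pd2 u a b + Vpot θ a b * Vpot θ a b * (u a b * u a b) - σ * (u a b * u a b))) - pd2 u a b * (a * pd1 u a b + b * pd2 u a b)) s t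
      = 2 * ((Vpot θ s t)^2 * (u s t)^2) + (-σ) * (u s t)^2 := by
    intro s t ht
    have heig := hu.eigen s t ht.le
    simp only [Hop] at heig
    have hsym : pd1 (pd2 u) s t = pd2 (pd1 u) s t := hSm.symm s t
    have hV : Vpot θ s t = t * Real.cos θ - s * Real.sin θ := rfl
    rw [eF2 s t, eG2 s t]
    linear_combination (s * pd1 u s t + t * pd2 u s t) * heig
      + (s * pd2 u s t - t * pd1 u s t) * hsym
      - Vpot θ s t * (u s t)^2 * hV
  have step2 : intHalf (fun s t => 2 * ((Vpot θ s t)^2 * (u s t)^2) + (-σ) * (u s t)^2) = 0 :=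
    (intHalf_congr id2).symm.trans master2
  have split2 : intHalf (fun s t => 2 * ((Vpot θ s t)^2 * (u s t)^2) + (-σ) * (u s t)^2)
      = 2 * intHalf (fun s t => (Vpot θ s t)^2 * (u s t)^2) + (-σ) * 1 := by
    rw [intHalf_add (SQ.const_mul 2) (DQ.const_mul 2) (SR.const_mul (-σ)) (DR.const_mul (-σ)),
      intHalf_const_mul, intHalf_const_mul, hu.normalized]
  have eq2 : 2 * intHalf (fun s t => (Vpot θ s t)^2 * (u s t)^2) - σ = 0 := by
    rw [split2] at step2; linarith
  constructor
  · linarith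
  · linarith

/-- The Virial identities: `∫ (|∂_s u|² + |∂_t u|²) = ∫ V_θ² u² = σ/2`. -/
theorem virial_identities (θ : ℝ) (hθ : θ ∈ Set.Ioo 0 (π/2))
    (u : ℝ → ℝ → ℝ) (σ : ℝ) (hu : IsModelEigen θ u σ) :
    intHalf (fun s t => (pd1 u s t)^2 + (pd2 u s t)^2) = σ / 2 ∧
    intHalf (fun s t => (Vpot θ s t)^2 * (u s t)^2) = σ / 2 := by
  exact virial_identities' θ u σ hu
end
end
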